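/- arXiv:1807.04183 — 2 statements merged into one kernel-verified Lean document; each statement's English description precedes it below -/
import Mathlib

section
/- Let w, w' be probability weight vectors in ℝⁿ with ‖w − w'‖₁ ≤ α‖z − z'‖, let points (Xᵢ,Zᵢ) lie within distance D of (x,z), and define B(x,z) = Σᵢ wᵢ‖(Xᵢ,Zᵢ) − (x,z)‖ (with weights w) and B(x,z') analogously with weights w'. Then |B(x,z) − B(x,z')| ≤ (1 + αD)‖z − z'‖. -/
/-- Concatenation of two Euclidean vectors, viewed in the `ℓ²` product space. -/
noncomputable def pr {d p : ℕ} (a : EuclideanSpace ℝ (Fin d)) (b : EuclideanSpace ℝ (Fin p)) :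
    WithLp 2 (EuclideanSpace ℝ (Fin d) × EuclideanSpace ℝ (Fin p)) :=
  (WithLp.equiv 2 _).symm (a, b)

lemma pr_dist {d p : ℕ} (x : EuclideanSpace ℝ (Fin d)) (z z' : EuclideanSpace ℝ (Fin p)) :
    dist (pr x z) (pr x z') = ‖z - z'‖ := by
  rw [pr, pr, WithLp.prod_dist_eq_of_L2]
  simp [dist_eq_norm, Real.sqrt_sq_eq_abs]

/-- If the weight vectors satisfy `‖w − w'‖₁ ≤ α‖z − z'‖` and all data points lie within
distance `D` of `(x,z)`, then the bias terms satisfy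
`|B(x,z) − B(x,z')| ≤ (1 + αD)‖z − z'‖`. -/
theorem abs_sub_bias_le_of_weights {d p n : ℕ} (w w' : Fin n → ℝ)
    (hw : ∀ i, 0 ≤ w i) (hw' : ∀ i, 0 ≤ w' i)
    (hws : ∑ i, w i = 1) (hw's : ∑ i, w' i = 1)
    (X : Fin n → EuclideanSpace ℝ (Fin d)) (Z : Fin n → EuclideanSpace ℝ (Fin p))
    (x : EuclideanSpace ℝ (Fin d)) (z z' : EuclideanSpace ℝ (Fin p))
    (α D : ℝ) (hα : 0 ≤ α) (hD : 0 ≤ D)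
    (hdist : ∀ i, dist (pr (X i) (Z i)) (pr x z) ≤ D)
    (hl1 : ∑ i, |w i - w' i| ≤ α * ‖z - z'‖) :
    |(∑ i, w i * dist (pr (X i) (Z i)) (pr x z)) -
        ∑ i, w' i * dist (pr (X i) (Z i)) (pr x z')| ≤ (1 + α * D) * ‖z - z'‖ := by
  set di := fun i => dist (pr (X i) (Z i)) (pr x z) with hdi
  set di' := fun i => dist (pr (X i) (Z i)) (pr x z') with hdi'
  have key : ∀ i, |di i - di' i| ≤ ‖z - z'‖ := by
    intro i
    have h := abs_dist_sub_le (pr x z) (pr x z') (pr (X i) (Z i))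
    rw [pr_dist x z z'] at h
    simpa [hdi, hdi', dist_comm] using h
  have hsplit : (∑ i, w i * di i) - ∑ i, w' i * di' i
      = (∑ i, (w i - w' i) * di i) + ∑ i, w' i * (di i - di' i) := by
    rw [← Finset.sum_add_distrib, ← Finset.sum_sub_distrib]
    congr 1; ext i; ring
  rw [hsplit]
  have h1 : |∑ i, (w i - w' i) * di i| ≤ α * ‖z - z'‖ * D := by
    calc |∑ i, (w i - w' i) * di i| ≤ ∑ i, |(w i - w' i) * di i| :=
          Finset.abs_sum_le_sum_abs _ _
    _ ≤ ∑ i, |w i - w' i| * D := by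
        apply Finset.sum_le_sum; intro i _
        rw [abs_mul]
        exact mul_le_mul_of_nonneg_left (by rw [abs_of_nonneg dist_nonneg]; exact hdist i)
          (abs_nonneg _)
    _ = (∑ i, |w i - w' i|) * D := by rw [Finset.sum_mul]
    _ ≤ α * ‖z - z'‖ * D := mul_le_mul_of_nonneg_right hl1 hD
  have h2 : |∑ i, w' i * (di i - di' i)| ≤ ‖z - z'‖ := by
    calc |∑ i, w' i * (di i - di' i)| ≤ ∑ i, |w' i * (di i - di' i)| :=
          Finset.abs_sum_le_sum_abs _ _
    _ ≤ ∑ i, w' i * ‖z - z'‖ := by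
        apply Finset.sum_le_sum; intro i _
        rw [abs_mul, abs_of_nonneg (hw' i)]
        exact mul_le_mul_of_nonneg_left (key i) (hw' i)
    _ = ‖z - z'‖ := by rw [← Finset.sum_mul, hw's, one_mul]
  calc |(∑ i, (w i - w' i) * di i) + ∑ i, w' i * (di i - di' i)|
      ≤ |∑ i, (w i - w' i) * di i| + |∑ i, w' i * (di i - di' i)| := abs_add_le _ _
    _ ≤ α * ‖z - z'‖ * D + ‖z - z'‖ := add_le_add h1 h2
    _ = (1 + α * D) * ‖z - z'‖ := by ring
end

section
/- In the (m+1)-action two-state bandit example of the paper, with uncertainty penalty λ√(ln m / m) for λ ≥ √2, the Bayesian expected regrets satisfy E[R^{UP}] = o(E[R^{PCM}]) as m → ∞; i.e., the ratio E[R^{UP}]/E[R^{PCM}] tends to 0. -/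
open MeasureTheory ProbabilityTheory Filter
open scoped NNReal ENNReal

section Auxiliary
open Real Set
open scoped NNReal


lemma chernoff_identity (μ c θ : ℝ) (v : ℝ≥0) (hv : v ≠ 0) :
    (fun x => Real.exp (θ*(x-c)) * gaussianPDFReal μ v x)
      = fun x => Real.exp (θ*(μ-c)+θ^2*v/2) * gaussianPDFReal (μ+θ*v) v x := by
  have hv' : (v:ℝ) ≠ 0 := by exact_mod_cast hv
  funext x
  simp only [gaussianPDFReal]
  rw [mul_left_comm, ← Real.exp_add, mul_left_comm (Real.exp _), ← Real.exp_add]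
  congr 2
  field_simp
  ring

lemma chernoff_integral (μ c θ : ℝ) (v : ℝ≥0) (hv : v ≠ 0) :
    ∫ x, Real.exp (θ*(x-c)) * gaussianPDFReal μ v x = Real.exp (θ*(μ-c)+θ^2*v/2) := by
  rw [chernoff_identity μ c θ v hv, integral_const_mul,
    integral_gaussianPDFReal_eq_one _ hv, mul_one]

lemma chernoff_integrable (μ c θ : ℝ) (v : ℝ≥0) (hv : v ≠ 0) :
    Integrable (fun x => Real.exp (θ*(x-c)) * gaussianPDFReal μ v x) := by
  rw [chernoff_identity μ c θ v hv]
  exact (integrable_gaussianPDFReal _ _).const_mul _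

lemma gauss_tail_Iic (μ : ℝ) {v : ℝ≥0} (hv : v ≠ 0) {a : ℝ} (ha : 0 ≤ a) :
    gaussianReal μ v (Set.Iic (μ - a)) ≤ ENNReal.ofReal (Real.exp (-a^2/(2*v))) := by
  have hv' : (0:ℝ) < (v:ℝ) := by positivity
  set θ : ℝ := -a/(v:ℝ) with hθ
  rw [gaussianReal_apply_eq_integral μ hv]
  apply ENNReal.ofReal_le_ofReal
  have key : ∫ x in Set.Iic (μ - a), gaussianPDFReal μ v x
      ≤ ∫ x, Real.exp (θ*(x-(μ-a))) * gaussianPDFReal μ v x := by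
    refine le_trans (setIntegral_mono_on ((integrable_gaussianPDFReal μ v).integrableOn)
      ((chernoff_integrable μ (μ-a) θ v hv).integrableOn) measurableSet_Iic ?_) ?_
    · intro x hx
      have h1 : (1:ℝ) ≤ Real.exp (θ*(x-(μ-a))) := by
        rw [← Real.exp_zero]
        apply Real.exp_le_exp.2
        have hx' : x - (μ - a) ≤ 0 := by simpa using hx
        have hθ0 : 0 ≤ -θ := by
          rw [hθ, neg_div, neg_neg]; positivity
        nlinarith [mul_nonneg hθ0 (neg_nonneg.2 hx')]
      nlinarith [gaussianPDFReal_nonneg μ v x]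
    · exact setIntegral_le_integral (chernoff_integrable μ (μ-a) θ v hv)
        (Filter.Eventually.of_forall fun x =>
          mul_nonneg (Real.exp_nonneg _) (gaussianPDFReal_nonneg _ _ _))
  refine key.trans ?_
  rw [chernoff_integral μ (μ-a) θ v hv]
  apply le_of_eq
  congr 1
  rw [hθ]
  field_simp
  ring

lemma gauss_tail_Ici (μ : ℝ) {v : ℝ≥0} (hv : v ≠ 0) {a : ℝ} (ha : 0 ≤ a) :
    gaussianReal μ v (Set.Ici (μ + a)) ≤ ENNReal.ofReal (Real.exp (-a^2/(2*v))) := by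
  have hv' : (0:ℝ) < (v:ℝ) := by positivity
  set θ : ℝ := a/(v:ℝ) with hθ
  rw [gaussianReal_apply_eq_integral μ hv]
  apply ENNReal.ofReal_le_ofReal
  have key : ∫ x in Set.Ici (μ + a), gaussianPDFReal μ v x
      ≤ ∫ x, Real.exp (θ*(x-(μ+a))) * gaussianPDFReal μ v x := by
    refine le_trans (setIntegral_mono_on ((integrable_gaussianPDFReal μ v).integrableOn)
      ((chernoff_integrable μ (μ+a) θ v hv).integrableOn) measurableSet_Ici ?_) ?_
    · intro x hx
      have h1 : (1:ℝ) ≤ Real.exp (θ*(x-(μ+a))) := by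
        rw [← Real.exp_zero]
        apply Real.exp_le_exp.2
        have hx' : 0 ≤ x - (μ + a) := by simpa using hx
        positivity
      nlinarith [gaussianPDFReal_nonneg μ v x]
    · exact setIntegral_le_integral (chernoff_integrable μ (μ+a) θ v hv)
        (Filter.Eventually.of_forall fun x =>
          mul_nonneg (Real.exp_nonneg _) (gaussianPDFReal_nonneg _ _ _))
  refine key.trans ?_
  rw [chernoff_integral μ (μ+a) θ v hv]
  apply le_of_eq
  congr 1
  rw [hθ]
  field_simp
  ring

lemma gauss_low {v : ℝ≥0} (hv : v ≠ 0) :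
    ENNReal.ofReal ((Real.sqrt (2*Real.pi))⁻¹ * Real.exp (-(1+Real.sqrt v)^2/(2*v)))
      ≤ gaussianReal 1 v (Set.Iio 0) := by
  have hv' : (0:ℝ) < (v:ℝ) := by positivity
  rw [gaussianReal_apply_eq_integral 1 hv]
  apply ENNReal.ofReal_le_ofReal
  have hsub : Set.Ioo (-Real.sqrt v) 0 ⊆ Set.Iio (0:ℝ) := Set.Ioo_subset_Iio_self
  have hlow : ∀ x ∈ Set.Ioo (-Real.sqrt v) (0:ℝ),
      (Real.sqrt (2*Real.pi*v))⁻¹ * Real.exp (-(1+Real.sqrt v)^2/(2*v)) ≤ gaussianPDFReal 1 v x := by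
    intro x hx
    rw [gaussianPDFReal]
    apply mul_le_mul_of_nonneg_left _ (by positivity)
    apply Real.exp_le_exp.2
    rw [div_le_div_iff_of_pos_right (by positivity : (0:ℝ) < 2*v)]
    nlinarith [hx.1, hx.2, Real.sqrt_nonneg (v:ℝ), Real.sq_sqrt hv'.le]
  -- integral over Ioo of const ≤ integral over Ioo of pdf ≤ integral over Iio of pdf
  have h1 : (Real.sqrt v) * ((Real.sqrt (2*Real.pi*v))⁻¹ * Real.exp (-(1+Real.sqrt v)^2/(2*v)))
      ≤ ∫ x in Set.Ioo (-Real.sqrt v) (0:ℝ), gaussianPDFReal 1 v x := by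
    have := setIntegral_mono_on
      (integrableOn_const (by rw [Real.volume_Ioo]; exact ENNReal.ofReal_ne_top))
      ((integrable_gaussianPDFReal 1 v).integrableOn) measurableSet_Ioo hlow
    rw [setIntegral_const] at this
    refine le_trans (le_of_eq ?_) this
    rw [Measure.real, Real.volume_Ioo]
    rw [ENNReal.toReal_ofReal (by simpa using Real.sqrt_nonneg (v:ℝ))]
    simp [smul_eq_mul]
  have h2 : ∫ x in Set.Ioo (-Real.sqrt v) (0:ℝ), gaussianPDFReal 1 v x
      ≤ ∫ x in Set.Iio (0:ℝ), gaussianPDFReal 1 v x :=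
    setIntegral_mono_set ((integrable_gaussianPDFReal 1 v).integrableOn)
      (Filter.Eventually.of_forall fun x => gaussianPDFReal_nonneg _ _ _)
      (Filter.Eventually.of_forall hsub)
  refine le_trans (le_trans (le_of_eq ?_) h1) h2
  -- √v * ((√(2πv))⁻¹ * e) = (√(2π))⁻¹ * e
  rw [show (2*Real.pi*(v:ℝ)) = (2*Real.pi)*(v:ℝ) by ring, Real.sqrt_mul (by positivity)]
  rw [mul_inv]
  have : Real.sqrt v ≠ 0 := by positivity
  field_simp
  ring_nf
  rw [Real.sqrt_mul (by positivity : (0:ℝ) ≤ v*π), Real.sqrt_mul (by positivity : (0:ℝ) ≤ v)]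
  ring

lemma sqrt_tendsto : Filter.Tendsto Real.sqrt atTop atTop := by
  apply tendsto_atTop_atTop.2
  intro b
  refine ⟨b^2, fun x hx => ?_⟩
  calc b ≤ |b| := le_abs_self b
  _ = Real.sqrt (b^2) := (Real.sqrt_sq_eq_abs b).symm
  _ ≤ Real.sqrt x := Real.sqrt_le_sqrt hx

lemma log_le_two_sqrt {x : ℝ} (hx : 0 < x) : Real.log x ≤ 2 * Real.sqrt x := by
  have h1 : Real.log (Real.sqrt x) ≤ Real.sqrt x - 1 :=
    Real.log_le_sub_one_of_pos (Real.sqrt_pos.2 hx)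
  rw [Real.log_sqrt hx.le] at h1
  linarith

lemma phi1_tendsto (lam : ℝ) (hlam : Real.sqrt 2 ≤ lam) :
    Tendsto (fun m : ℕ => Real.log m + Real.sqrt m + 1/2
      - lam * Real.sqrt (m * Real.log m)) atTop atBot := by
  have hcast : Tendsto (fun m : ℕ => (m:ℝ)) atTop atTop := tendsto_natCast_atTop_atTop
  have hb : Tendsto (fun m : ℕ => 1/2 - Real.sqrt (m:ℝ)) atTop atBot := by
    apply tendsto_atBot_add_const_left _ (1/2 : ℝ)
    exact tendsto_neg_atTop_atBot.comp (sqrt_tendsto.comp hcast)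
  refine tendsto_atBot_mono' atTop ?_ hb
  filter_upwards [hcast.eventually_ge_atTop (Real.exp 8)] with m hm
  set x : ℝ := (m:ℝ) with hx
  have hx0 : 0 < x := lt_of_lt_of_le (Real.exp_pos 8) hm
  have hlog8 : 8 ≤ Real.log x := (Real.le_log_iff_exp_le hx0).2 hm
  have hlog : Real.log x ≤ 2 * Real.sqrt x := log_le_two_sqrt hx0
  have hkey : 4 * Real.sqrt x ≤ lam * Real.sqrt (x * Real.log x) := by
    have h2 : Real.sqrt 2 * Real.sqrt (x * Real.log x) = Real.sqrt (2 * (x * Real.log x)) :=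
      (Real.sqrt_mul (by norm_num) _).symm
    have h3 : Real.sqrt (16 * x) ≤ Real.sqrt (2 * (x * Real.log x)) := by
      apply Real.sqrt_le_sqrt
      nlinarith
    have h4 : Real.sqrt (16 * x) = 4 * Real.sqrt x := by
      rw [Real.sqrt_mul (by norm_num), show (16:ℝ) = 4^2 by norm_num, Real.sqrt_sq (by norm_num)]
    have h5 : Real.sqrt 2 * Real.sqrt (x * Real.log x) ≤ lam * Real.sqrt (x * Real.log x) :=
      mul_le_mul_of_nonneg_right hlam (Real.sqrt_nonneg _)
    calc 4 * Real.sqrt x = Real.sqrt (16 * x) := h4.symm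
      _ ≤ Real.sqrt (2 * (x * Real.log x)) := h3
      _ = Real.sqrt 2 * Real.sqrt (x * Real.log x) := h2.symm
      _ ≤ lam * Real.sqrt (x * Real.log x) := h5
  linarith

lemma phi2_tendsto (lam : ℝ) (hlam : Real.sqrt 2 ≤ lam) :
    Tendsto (fun m : ℕ => -((m:ℝ)/2) + Real.sqrt m + 1/2
      + 2 * lam * Real.sqrt (m * Real.log m)) atTop atBot := by
  have hcast : Tendsto (fun m : ℕ => (m:ℝ)) atTop atTop := tendsto_natCast_atTop_atTop
  have hlam0 : 0 < lam := lt_of_lt_of_le (by positivity) hlam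
  set c : ℝ := 16 * Real.sqrt 2 * lam with hc
  have hc0 : 0 < c := by positivity
  have hb : Tendsto (fun m : ℕ => 1/2 - (m:ℝ)/4) atTop atBot := by
    apply tendsto_atBot_add_const_left _ (1/2 : ℝ)
    apply tendsto_neg_atTop_atBot.comp
    exact hcast.atTop_div_const (by norm_num)
  refine tendsto_atBot_mono' atTop ?_ hb
  filter_upwards [hcast.eventually_ge_atTop (max 64 (c^2)^2),
      (sqrt_tendsto.comp hcast).eventually_ge_atTop (max 8 (c^2))] with m hm hs
  set x : ℝ := (m:ℝ) with hx
  have hs8 : (8:ℝ) ≤ Real.sqrt x := (le_max_left (8:ℝ) (c^2)).trans hs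
  have hsc : c^2 ≤ Real.sqrt x := (le_max_right (8:ℝ) (c^2)).trans hs
  have hx0 : 0 < x := Real.sqrt_pos.1 (by linarith)
  have hsqx : Real.sqrt x * Real.sqrt x = x := Real.mul_self_sqrt hx0.le
  -- √x ≤ x/8
  have h8 : Real.sqrt x ≤ x / 8 := by
    rw [le_div_iff₀ (by norm_num)]
    nlinarith
  -- √x ≤ x / c^2
  have hxc : Real.sqrt x ≤ x / c^2 := by
    rw [le_div_iff₀ (by positivity)]
    nlinarith
  -- 2 lam √(x log x) ≤ x/8
  have hkey : 2 * lam * Real.sqrt (x * Real.log x) ≤ x / 8 := by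
    have hlog : Real.log x ≤ 2 * Real.sqrt x := log_le_two_sqrt hx0
    have h1 : Real.sqrt (x * Real.log x) ≤ Real.sqrt (2 * (x * Real.sqrt x)) := by
      apply Real.sqrt_le_sqrt
      nlinarith
    have h2 : x * Real.sqrt x ≤ x * (x / c^2) :=
      mul_le_mul_of_nonneg_left hxc hx0.le
    have h3 : Real.sqrt (2 * (x * Real.sqrt x)) ≤ Real.sqrt (2 * (x * (x/c^2))) := by
      apply Real.sqrt_le_sqrt
      nlinarith
    have h4 : Real.sqrt (2 * (x * (x/c^2))) = Real.sqrt 2 * (x / c) := by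
      rw [Real.sqrt_mul (by norm_num)]
      congr 1
      rw [show x * (x/c^2) = (x/c)^2 by field_simp]
      exact Real.sqrt_sq (by positivity)
    have h5 : 2 * lam * (Real.sqrt 2 * (x / c)) = x / 8 := by
      rw [hc]
      have hs2 : Real.sqrt 2 ≠ 0 := by positivity
      field_simp
      ring
    calc 2 * lam * Real.sqrt (x * Real.log x)
        ≤ 2 * lam * Real.sqrt (2 * (x * (x/c^2))) := by
          apply mul_le_mul_of_nonneg_left (h1.trans h3) (by positivity)
      _ = x / 8 := by rw [h4, h5]
  linarith

lemma regret_integral {Ω : Type*} [MeasureSpace Ω] [IsProbabilityMeasure (ℙ : Measure Ω)]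
    {A : Set Ω} (hA : MeasurableSet A) {k : ℕ} {g : Ω → Fin (k+1)} (hg : Measurable g) :
    ∫ ω, (A.indicator (fun _ => if g ω = 0 then (0:ℝ) else 1) ω
        + Aᶜ.indicator (fun _ => if g ω = 0 then (1:ℝ) else 0) ω)
      = ((ℙ : Measure Ω) (A ∩ (g ⁻¹' {0})ᶜ)).toReal
        + ((ℙ : Measure Ω) (Aᶜ ∩ g ⁻¹' {0})).toReal := by
  have hg0 : MeasurableSet (g ⁻¹' {0}) := hg (measurableSet_singleton 0)
  have h : ∀ ω, (A.indicator (fun _ => if g ω = 0 then (0:ℝ) else 1) ω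
        + Aᶜ.indicator (fun _ => if g ω = 0 then (1:ℝ) else 0) ω)
      = (A ∩ (g ⁻¹' {0})ᶜ).indicator (fun _ => (1:ℝ)) ω
        + (Aᶜ ∩ g ⁻¹' {0}).indicator (fun _ => (1:ℝ)) ω := by
    intro ω
    by_cases hωA : ω ∈ A <;> by_cases hσω : g ω = 0 <;>
      simp [Set.indicator_apply, hωA, hσω]
  rw [integral_congr_ae (Filter.Eventually.of_forall h), integral_add
      ((integrable_const (1:ℝ)).indicator (hA.inter hg0.compl))
      ((integrable_const (1:ℝ)).indicator (hA.compl.inter hg0)),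
    integral_indicator_const (1:ℝ) (hA.inter hg0.compl),
    integral_indicator_const (1:ℝ) (hA.compl.inter hg0)]
  simp
  rfl

lemma meas_inter_cond {Ω : Type*} [MeasureSpace Ω] {A : Set Ω} (hA : MeasurableSet A)
    (hhalf : (ℙ : Measure Ω) A = 1/2) (S : Set Ω) :
    (ℙ : Measure Ω) (A ∩ S) = (1/2) * ProbabilityTheory.cond ℙ A S := by
  rw [ProbabilityTheory.cond_apply hA, hhalf, ← mul_assoc]
  have h : (1/2 : ℝ≥0∞) * (1/2)⁻¹ = 1 := ENNReal.mul_inv_cancel (by norm_num) (by norm_num)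
  rw [h, one_mul]

end Auxiliary

set_option maxHeartbeats 1000000 in
/-- **The two-state bandit example** (Example 1). There are `m+1` actions and two equally
probable states of the world (the event `A` and its complement). In state `A`, action `0`
has deterministic cost `0` and actions `1,…,m` have i.i.d. `N(1,1)` costs; in state `Aᶜ`,
action `0` has deterministic cost `1` and actions `1,…,m` have i.i.d. `N(0,1)` costs.
The training data consists of `m` samples of each action, so the empirical mean `μ̂(j)` of
action `j ≥ 1` is conditionally `N(1, 1/m)` (on `A`) resp. `N(0, 1/m)` (on `Aᶜ`), while
`μ̂(0)` equals the deterministic cost. `PCM` selects `argmin_j μ̂(j)`, while `UP` selects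
`argmin_j μ̂(j) + λ√(σ_j² ln m / m)` with `σ₀ = 0`, `σ_j = 1` for `j ≥ 1`. If `λ ≥ √2`,
then the Bayesian expected regrets satisfy `E[R^{UP}] = o(E[R^{PCM}])` as `m → ∞`. -/
theorem bandit_example_up_beats_pcm
    (Ω : ℕ → Type*) [∀ m, MeasureSpace (Ω m)] [∀ m, IsProbabilityMeasure (ℙ : Measure (Ω m))]
    (A : ∀ m, Set (Ω m)) (hAmeas : ∀ m, MeasurableSet (A m))
    (hAhalf : ∀ m, ℙ (A m) = 1 / 2)
    (muhat : ∀ m, Fin (m + 1) → Ω m → ℝ) (hmuMeas : ∀ m j, Measurable (muhat m j))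
    -- the empirical mean cost of the deterministic action 0
    (hmu0 : ∀ m ω, muhat m 0 ω = (A m)ᶜ.indicator (fun _ => (1 : ℝ)) ω)
    -- conditional distributions of the empirical mean costs of actions `j ≥ 1`
    (hmuA : ∀ m, 1 ≤ m → ∀ j : Fin (m + 1), j ≠ 0 →
      Measure.map (muhat m j) (ProbabilityTheory.cond ℙ (A m)) =
        gaussianReal 1 ((m : NNReal))⁻¹)
    (hmuAc : ∀ m, 1 ≤ m → ∀ j : Fin (m + 1), j ≠ 0 →
      Measure.map (muhat m j) (ProbabilityTheory.cond ℙ (A m)ᶜ) =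
        gaussianReal 0 ((m : NNReal))⁻¹)
    -- conditional independence of the empirical means across actions
    (hindA : ∀ m, iIndepFun (muhat m)
      (ProbabilityTheory.cond ℙ (A m)))
    (hindAc : ∀ m, iIndepFun (muhat m)
      (ProbabilityTheory.cond ℙ (A m)ᶜ))
    -- the penalty parameter
    (lam : ℝ) (hlam : Real.sqrt 2 ≤ lam)
    -- the predicted-cost-minimizing and uncertainty-penalizing selection rules
    (PCM : ∀ m, Ω m → Fin (m + 1)) (hPCMmeas : ∀ m, Measurable (PCM m))
    (hPCM : ∀ m ω (j : Fin (m + 1)), muhat m (PCM m ω) ω ≤ muhat m j ω)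
    (UP : ∀ m, Ω m → Fin (m + 1)) (hUPmeas : ∀ m, Measurable (UP m))
    (hUP : ∀ m ω (j : Fin (m + 1)),
      muhat m (UP m ω) ω +
          (if UP m ω = 0 then 0 else lam * Real.sqrt (Real.log m / m)) ≤
        muhat m j ω + (if j = 0 then 0 else lam * Real.sqrt (Real.log m / m))) :
    -- conclusion: the ratio of Bayesian expected regrets tends to `0`
    Tendsto (fun m =>
        (∫ ω, ((A m).indicator (fun _ => if UP m ω = 0 then (0 : ℝ) else 1) ω +
            (A m)ᶜ.indicator (fun _ => if UP m ω = 0 then (1 : ℝ) else 0) ω)) /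
        (∫ ω, ((A m).indicator (fun _ => if PCM m ω = 0 then (0 : ℝ) else 1) ω +
            (A m)ᶜ.indicator (fun _ => if PCM m ω = 0 then (1 : ℝ) else 0) ω)))
      atTop (nhds 0) := by
  have hlam0 : (0:ℝ) < lam := lt_of_lt_of_le (by positivity) hlam
  set t : ℕ → ℝ := fun m => lam * Real.sqrt (Real.log m / m) with ht_def
  set numer : ℕ → ℝ := fun m =>
    ∫ ω, ((A m).indicator (fun _ => if UP m ω = 0 then (0 : ℝ) else 1) ω +
        (A m)ᶜ.indicator (fun _ => if UP m ω = 0 then (1 : ℝ) else 0) ω) with hnumer_def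
  set denom : ℕ → ℝ := fun m =>
    ∫ ω, ((A m).indicator (fun _ => if PCM m ω = 0 then (0 : ℝ) else 1) ω +
        (A m)ᶜ.indicator (fun _ => if PCM m ω = 0 then (1 : ℝ) else 0) ω) with hdenom_def
  set W : ℕ → ℝ := fun m => Real.sqrt (2*Real.pi) *
    (Real.exp (Real.log m + Real.sqrt m + 1/2 - lam * Real.sqrt (m * Real.log m))
      + Real.exp (-((m:ℝ)/2) + Real.sqrt m + 1/2 + 2 * lam * Real.sqrt (m * Real.log m)))
    with hW_def
  -- nonnegativity of the integrands
  have hptwise : ∀ (m : ℕ) (g : Ω m → Fin (m+1)) (ω : Ω m),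
      (0:ℝ) ≤ (A m).indicator (fun _ => if g ω = 0 then (0 : ℝ) else 1) ω +
        (A m)ᶜ.indicator (fun _ => if g ω = 0 then (1 : ℝ) else 0) ω := by
    intro m g ω
    apply add_nonneg <;>
      exact Set.indicator_nonneg (fun _ _ => by split_ifs <;> norm_num) ω
  have hnum_nonneg : ∀ m, 0 ≤ numer m := fun m => integral_nonneg (hptwise m (UP m))
  have hden_nonneg : ∀ m, 0 ≤ denom m := fun m => integral_nonneg (hptwise m (PCM m))
  -- W tends to 0
  have hWlim : Tendsto W atTop (nhds 0) := by
    have h1 := Real.tendsto_exp_atBot.comp (phi1_tendsto lam hlam)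
    have h2 := Real.tendsto_exp_atBot.comp (phi2_tendsto lam hlam)
    have h3 := (h1.add h2).const_mul (Real.sqrt (2*Real.pi))
    rw [hW_def]
    simp only [Function.comp_def] at h3
    convert h3 using 2
    norm_num
  -- t m tends to 0
  have h_t0 : Tendsto t atTop (nhds 0) := by
    have h1 : Tendsto (fun x : ℝ => Real.log x / x) atTop (nhds 0) :=
      Real.isLittleO_log_id_atTop.tendsto_div_nhds_zero
    have h2 := ((Real.continuous_sqrt.tendsto' 0 0 Real.sqrt_zero).comp
      (h1.comp tendsto_natCast_atTop_atTop)).const_mul lam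
    simpa [ht_def, Function.comp] using h2
  have ht_half : ∀ᶠ m in atTop, t m ≤ 1/2 :=
    (h_t0.eventually_lt_const (by norm_num : (0:ℝ) < 1/2)).mono fun m hm => hm.le
  -- main eventual bound
  apply squeeze_zero' (Filter.Eventually.of_forall fun m =>
    div_nonneg (hnum_nonneg m) (hden_nonneg m)) _ hWlim
  filter_upwards [eventually_ge_atTop 2, ht_half] with m hm2 htm
  -- basic facts about m
  have hm1 : 1 ≤ m := le_trans (by norm_num) hm2
  have hm0R : (0:ℝ) < (m:ℝ) := by positivity
  have hm1R : (1:ℝ) ≤ (m:ℝ) := by exact_mod_cast hm1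
  have hlogm : 0 ≤ Real.log m := Real.log_nonneg hm1R
  have htm0 : 0 ≤ t m := mul_nonneg hlam0.le (Real.sqrt_nonneg _)
  have hv : ((m : ℝ≥0))⁻¹ ≠ 0 :=
    inv_ne_zero (Nat.cast_ne_zero.2 (by omega))
  have hvR : ((((m : ℝ≥0))⁻¹ : ℝ≥0) : ℝ) = ((m:ℝ))⁻¹ := by simp
  have htmm : t m = lam * Real.sqrt (Real.log m / m) := rfl
  have h_half : ENNReal.ofReal ((1:ℝ)/2) = (1:ℝ≥0∞)/2 := by
    rw [ENNReal.ofReal_div_of_pos (by norm_num : (0:ℝ) < 2)]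
    simp
  have hAc_half : ℙ ((A m)ᶜ) = 1/2 := by
    rw [prob_compl_eq_one_sub (hAmeas m), hAhalf m]
    rw [ENNReal.sub_half ENNReal.one_ne_top]
  -- exact formulas for numer and denom
  have hnum_eq := regret_integral (hAmeas m) (hUPmeas m)
  have hden_eq := regret_integral (hAmeas m) (hPCMmeas m)
  -- `m t m = lam √(m log m)`
  have hmt : (m:ℝ) * t m = lam * Real.sqrt ((m:ℝ) * Real.log m) := by
    have h1 : Real.sqrt (Real.log m / m) = Real.sqrt (Real.log m) / Real.sqrt (m:ℝ) :=
      Real.sqrt_div hlogm _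
    have h2 : Real.sqrt ((m:ℝ) * Real.log m)
        = Real.sqrt (m:ℝ) * Real.sqrt (Real.log m) := Real.sqrt_mul hm0R.le _
    rw [htmm, h1, h2,
      show (m:ℝ) * (lam * (Real.sqrt (Real.log m) / Real.sqrt (m:ℝ)))
        = lam * Real.sqrt (Real.log m) * ((m:ℝ) / Real.sqrt (m:ℝ)) by ring,
      Real.div_sqrt]
    ring
  -- the exact value of the denominator exponent
  have hc1v : -(1+Real.sqrt (((m:ℝ))⁻¹))^2/(2*((m:ℝ))⁻¹)
      = -((m:ℝ)/2) - Real.sqrt m - 1/2 := by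
    have hy : Real.sqrt (m:ℝ) * Real.sqrt (m:ℝ) = (m:ℝ) := Real.mul_self_sqrt hm0R.le
    have hyne : Real.sqrt (m:ℝ) ≠ 0 := by positivity
    rw [← hy, Real.sqrt_inv, Real.sqrt_mul_self (Real.sqrt_nonneg _)]
    field_simp
    ring_nf
  ------------------------------------------------------------------
  -- UPPER BOUND for the numerator
  ------------------------------------------------------------------
  -- part 1 : ℙ (A ∩ {UP ≠ 0})
  have hsub1 : A m ∩ ((UP m) ⁻¹' {0})ᶜ ⊆
      ⋃ j ∈ Finset.univ.erase (0 : Fin (m+1)), (A m ∩ muhat m j ⁻¹' Set.Iic (-(t m))) := by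
    rintro ω ⟨hωA, hω0⟩
    have hω0' : UP m ω ≠ 0 := by simpa using hω0
    simp only [Set.mem_iUnion, Finset.mem_erase, Finset.mem_univ, and_true, exists_prop]
    refine ⟨UP m ω, hω0', hωA, ?_⟩
    have h := hUP m ω 0
    rw [if_neg hω0', if_pos rfl] at h
    have h0 : muhat m 0 ω = 0 := by
      rw [hmu0]
      exact Set.indicator_of_notMem (by simpa using hωA) _
    rw [h0] at h
    simp only [Set.mem_preimage, Set.mem_Iic]
    linarith [htmm]
  have hP1 : (ℙ : Measure (Ω m)) (A m ∩ ((UP m) ⁻¹' {0})ᶜ) ≤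
      ENNReal.ofReal ((1/2) * ((m:ℝ) * Real.exp (-(m:ℝ)*(1+t m)^2/2))) := by
    refine (measure_mono hsub1).trans ?_
    refine (measure_biUnion_finset_le _ _).trans ?_
    have hterm : ∀ j ∈ Finset.univ.erase (0 : Fin (m+1)),
        (ℙ : Measure (Ω m)) (A m ∩ muhat m j ⁻¹' Set.Iic (-(t m))) ≤
          (1/2) * ENNReal.ofReal (Real.exp (-(m:ℝ)*(1+t m)^2/2)) := by
      intro j hj
      have hj0 : j ≠ 0 := (Finset.mem_erase.1 hj).1
      rw [meas_inter_cond (hAmeas m) (hAhalf m)]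
      refine mul_le_mul_right ?_ _
      rw [← Measure.map_apply (hmuMeas m j) measurableSet_Iic, hmuA m hm1 j hj0]
      rw [show Set.Iic (-(t m)) = Set.Iic ((1:ℝ) - (1 + t m)) by norm_num]
      refine (gauss_tail_Iic 1 hv (a := 1 + t m) (by linarith)).trans (le_of_eq ?_)
      congr 1
      rw [hvR]
      rw [show -(1 + t m) ^ 2 / (2 * ((m:ℝ))⁻¹) = -(m:ℝ)*(1+t m)^2/2 by
        field_simp]
    refine (Finset.sum_le_sum hterm).trans ?_
    rw [Finset.sum_const, Finset.card_erase_of_mem (Finset.mem_univ _), Finset.card_univ,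
      Fintype.card_fin, Nat.add_sub_cancel, nsmul_eq_mul,
      ENNReal.ofReal_mul (by norm_num : (0:ℝ) ≤ 1/2), h_half,
      ENNReal.ofReal_mul (by positivity : (0:ℝ) ≤ (m:ℝ)), ENNReal.ofReal_natCast]
    refine le_of_eq ?_
    ring
  -- part 2 : ℙ (Aᶜ ∩ {UP = 0})
  set j1 : Fin (m+1) := ⟨1, by omega⟩ with hj1_def
  set j2 : Fin (m+1) := ⟨2, by omega⟩ with hj2_def
  have hj1 : j1 ≠ 0 := by simp [hj1_def, Fin.ext_iff]
  have hj2 : j2 ≠ 0 := by simp [hj2_def, Fin.ext_iff]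
  have hj12 : j1 ≠ j2 := by simp [hj1_def, hj2_def, Fin.ext_iff]
  have hsub2 : (A m)ᶜ ∩ (UP m) ⁻¹' {0} ⊆
      (A m)ᶜ ∩ (muhat m j1 ⁻¹' Set.Ici (1 - t m) ∩ muhat m j2 ⁻¹' Set.Ici (1 - t m)) := by
    rintro ω ⟨hωA, hω0⟩
    have hω0' : UP m ω = 0 := by simpa using hω0
    have h0 : muhat m 0 ω = 1 := by
      rw [hmu0]
      exact Set.indicator_of_mem hωA _
    have key : ∀ j : Fin (m+1), j ≠ 0 → 1 - t m ≤ muhat m j ω := by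
      intro j hj
      have h := hUP m ω j
      rw [if_pos hω0', hω0', h0, if_neg hj] at h
      linarith
    exact ⟨hωA, key j1 hj1, key j2 hj2⟩
  have hP2 : (ℙ : Measure (Ω m)) ((A m)ᶜ ∩ (UP m) ⁻¹' {0}) ≤
      ENNReal.ofReal ((1/2) * Real.exp (-(m:ℝ)*(1-t m)^2)) := by
    refine (measure_mono hsub2).trans ?_
    rw [meas_inter_cond (hAmeas m).compl hAc_half,
      ENNReal.ofReal_mul (by norm_num : (0:ℝ) ≤ 1/2), h_half]
    refine mul_le_mul_right ?_ _
    have hind := (hindAc m).indepFun hj12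
    rw [hind.measure_inter_preimage_eq_mul _ _ measurableSet_Ici measurableSet_Ici]
    rw [← Measure.map_apply (hmuMeas m j1) measurableSet_Ici,
      ← Measure.map_apply (hmuMeas m j2) measurableSet_Ici,
      hmuAc m hm1 j1 hj1, hmuAc m hm1 j2 hj2]
    have hg : gaussianReal 0 ((m : ℝ≥0))⁻¹ (Set.Ici (1 - t m)) ≤
        ENNReal.ofReal (Real.exp (-(1 - t m)^2/(2*((m:ℝ))⁻¹))) := by
      have := gauss_tail_Ici 0 hv (a := 1 - t m) (by linarith)
      rw [hvR] at this
      simpa using this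
    refine (mul_le_mul' hg hg).trans (le_of_eq ?_)
    rw [← ENNReal.ofReal_mul (Real.exp_nonneg _), ← Real.exp_add]
    congr 1
    rw [show -(1 - t m) ^ 2 / (2 * ((m:ℝ))⁻¹) + -(1 - t m) ^ 2 / (2 * ((m:ℝ))⁻¹)
        = -(m:ℝ)*(1-t m)^2 by field_simp; ring]
  have hnum_le : numer m ≤ (1/2) * ((m:ℝ) * Real.exp (-(m:ℝ)*(1+t m)^2/2))
      + (1/2) * Real.exp (-(m:ℝ)*(1-t m)^2) := by
    rw [hnumer_def]
    simp only
    rw [hnum_eq]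
    exact add_le_add (ENNReal.toReal_le_of_le_ofReal (by positivity) hP1)
      (ENNReal.toReal_le_of_le_ofReal (by positivity) hP2)
  ------------------------------------------------------------------
  -- LOWER BOUND for the denominator
  ------------------------------------------------------------------
  set Lb : ℝ := (1/2) * ((Real.sqrt (2*Real.pi))⁻¹ *
    Real.exp (-(1+Real.sqrt (((m:ℝ))⁻¹))^2/(2*((m:ℝ))⁻¹))) with hLb_def
  have hLb_pos : 0 < Lb := by rw [hLb_def]; positivity
  have hsubd : A m ∩ muhat m j1 ⁻¹' Set.Iio 0 ⊆ A m ∩ ((PCM m) ⁻¹' {0})ᶜ := by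
    rintro ω ⟨hωA, hpre⟩
    refine ⟨hωA, fun h0 => ?_⟩
    have h0' : PCM m ω = 0 := by simpa using h0
    have h := hPCM m ω j1
    rw [h0'] at h
    have hmu0' : muhat m 0 ω = 0 := by
      rw [hmu0]
      exact Set.indicator_of_notMem (by simpa using hωA) _
    rw [hmu0'] at h
    have : muhat m j1 ω < 0 := hpre
    linarith
  have hPd : ENNReal.ofReal Lb ≤ (ℙ : Measure (Ω m)) (A m ∩ ((PCM m) ⁻¹' {0})ᶜ) := by
    refine le_trans ?_ (measure_mono hsubd)
    rw [meas_inter_cond (hAmeas m) (hAhalf m),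
      ← Measure.map_apply (hmuMeas m j1) measurableSet_Iio, hmuA m hm1 j1 hj1]
    rw [hLb_def, ENNReal.ofReal_mul (by norm_num : (0:ℝ) ≤ 1/2), h_half]
    refine mul_le_mul_right ?_ _
    have := gauss_low hv
    rw [hvR] at this
    exact this
  have hden_ge : Lb ≤ denom m := by
    rw [hdenom_def]
    simp only
    rw [hden_eq]
    have h1 : Lb ≤ ((ℙ : Measure (Ω m)) (A m ∩ ((PCM m) ⁻¹' {0})ᶜ)).toReal := by
      rw [← ENNReal.toReal_ofReal hLb_pos.le]
      exact ENNReal.toReal_mono (measure_ne_top _ _) hPd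
    have h2 : 0 ≤ ((ℙ : Measure (Ω m)) ((A m)ᶜ ∩ (PCM m) ⁻¹' {0})).toReal :=
      ENNReal.toReal_nonneg
    linarith
  ------------------------------------------------------------------
  -- RATIO BOUND
  ------------------------------------------------------------------
  have hden_pos : 0 < denom m := lt_of_lt_of_le hLb_pos hden_ge
  set Ub : ℝ := (1/2) * ((m:ℝ) * Real.exp (-(m:ℝ)*(1+t m)^2/2))
      + (1/2) * Real.exp (-(m:ℝ)*(1-t m)^2) with hUb_def
  have hUb_nonneg : 0 ≤ Ub := by rw [hUb_def]; positivity
  have hratio1 : numer m / denom m ≤ Ub / Lb :=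
    div_le_div₀ hUb_nonneg hnum_le hLb_pos hden_ge
  -- key exponent inequalities
  have hWm : Ub / Lb ≤ W m := by
    rw [div_le_iff₀ hLb_pos]
    set c1v : ℝ := -(1+Real.sqrt (((m:ℝ))⁻¹))^2/(2*((m:ℝ))⁻¹) with hc1v_def
    have key1 : (m:ℝ) * Real.exp (-(m:ℝ)*(1+t m)^2/2) ≤
        Real.exp (Real.log m + Real.sqrt m + 1/2 - lam * Real.sqrt (m * Real.log m))
          * Real.exp c1v := by
      have h' : (m:ℝ) * Real.exp (-(m:ℝ)*(1+t m)^2/2)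
          = Real.exp (Real.log m + -(m:ℝ)*(1+t m)^2/2) := by
        rw [Real.exp_add, Real.exp_log hm0R]
      rw [h', ← Real.exp_add]
      apply Real.exp_le_exp.2
      rw [hc1v]
      nlinarith [mul_nonneg hm0R.le (sq_nonneg (t m)), hmt]
    have key2 : Real.exp (-(m:ℝ)*(1-t m)^2) ≤
        Real.exp (-((m:ℝ)/2) + Real.sqrt m + 1/2 + 2 * lam * Real.sqrt (m * Real.log m))
          * Real.exp c1v := by
      rw [← Real.exp_add]
      apply Real.exp_le_exp.2
      rw [hc1v]
      nlinarith [mul_nonneg hm0R.le (sq_nonneg (t m)), hmt]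
    have hWLb : W m * Lb = (1/2) * (Real.exp (Real.log m + Real.sqrt m + 1/2
          - lam * Real.sqrt (m * Real.log m)) * Real.exp c1v
        + Real.exp (-((m:ℝ)/2) + Real.sqrt m + 1/2
          + 2 * lam * Real.sqrt (m * Real.log m)) * Real.exp c1v) := by
      have halg : ∀ S E1 E2 C : ℝ, S ≠ 0 →
          S * (E1 + E2) * ((1/2) * (S⁻¹ * C)) = (1/2)*(E1*C + E2*C) := by
        intro S E1 E2 C hS
        field_simp
      rw [hW_def, hLb_def]
      simp only
      refine halg _ _ _ _ ?_
      positivity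
    rw [hWLb, hUb_def]
    linarith [key1, key2]
  exact hratio1.trans hWm
end
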